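/- Let k, L, w be positive integers and let the vectors w_{j,i} for 1 ≤ j ≤ w, 1 ≤ i ≤ L be independent random vectors, each distributed uniformly on the unit sphere S^{k−1} of ℝ^k. For x = (x_1, …, x_L) ∈ (ℝ^k)^L define the hash g(x) ∈ ℤ^{wL} whose (j, i)-th coordinate is ⌊⟨w_{j,i}, x_i⟩⌋. Then for any real c > 2√k and any fixed x, y ∈ (ℝ^k)^L satisfying ‖x_i − y_i‖₂ > c for every 1 ≤ i ≤ L, the probability that every coordinate of g(x) differs from the corresponding coordinate of g(y) by at most 1 is strictly less than (2√k / c)^{wL}. -/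

import Mathlib

open MeasureTheory ProbabilityTheory

section Aux

open Real

lemma gamma_half_le (x : ℝ) (hx : 0 < x) :
    Real.Gamma (x + 1/2) ≤ Real.sqrt x * Real.Gamma x := by
  have hx1 : (0:ℝ) < x + 1 := by linarith
  have hxh : (0:ℝ) < x + 1/2 := by linarith
  have hgp := Real.Gamma_pos_of_pos hx
  have hgp1 := Real.Gamma_pos_of_pos hx1
  have hgph := Real.Gamma_pos_of_pos hxh
  have hc := Real.convexOn_log_Gamma.2 (Set.mem_Ioi.2 hx) (Set.mem_Ioi.2 hx1)
    (by norm_num : (0:ℝ) ≤ 1/2) (by norm_num : (0:ℝ) ≤ 1/2) (by norm_num)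
  simp only [smul_eq_mul, Function.comp_apply] at hc
  have heq : (1/2) * x + (1/2) * (x+1) = x + 1/2 := by ring
  rw [heq] at hc
  have h2 : Real.Gamma (x + 1/2) ^ 2 ≤ Real.Gamma x * Real.Gamma (x+1) := by
    have := Real.exp_le_exp.2 hc
    rw [Real.exp_log hgph] at this
    calc Real.Gamma (x+1/2) ^ 2 = Real.Gamma (x+1/2) * Real.Gamma (x+1/2) := sq _
      _ ≤ Real.exp (1/2 * Real.log (Real.Gamma x) + 1/2 * Real.log (Real.Gamma (x+1)))
          * Real.exp (1/2 * Real.log (Real.Gamma x) + 1/2 * Real.log (Real.Gamma (x+1))) :=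
        mul_le_mul this this hgph.le (Real.exp_pos _).le
      _ = Real.Gamma x * Real.Gamma (x+1) := by
        rw [← Real.exp_add]
        rw [show 1/2 * Real.log (Real.Gamma x) + 1/2 * Real.log (Real.Gamma (x+1))
            + (1/2 * Real.log (Real.Gamma x) + 1/2 * Real.log (Real.Gamma (x+1)))
          = Real.log (Real.Gamma x) + Real.log (Real.Gamma (x+1)) by ring]
        rw [Real.exp_add, Real.exp_log hgp, Real.exp_log hgp1]
  rw [Real.Gamma_add_one hx.ne'] at h2
  have h3 : Real.Gamma (x+1/2)^2 ≤ (Real.sqrt x * Real.Gamma x)^2 := by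
    rw [mul_pow, Real.sq_sqrt hx.le]; nlinarith
  have h4 := Real.sqrt_le_sqrt h3
  rwa [Real.sqrt_sq hgph.le, Real.sqrt_sq (by positivity)] at h4

lemma gamma_ineq (k : ℕ) (hk : 1 ≤ k) :
    2 * Real.Gamma ((k:ℝ)/2 + 1) ≤ Real.sqrt k * Real.sqrt π * Real.Gamma (((k:ℝ)+1)/2) := by
  rcases eq_or_lt_of_le hk with h1 | h2
  · rw [← h1]
    push_cast
    rw [show (1:ℝ)/2 + 1 = 1/2 + 1 from rfl, Real.Gamma_add_one (by norm_num),
      Real.Gamma_one_half_eq, show ((1:ℝ)+1)/2 = 1 by norm_num, Real.Gamma_one,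
      Real.sqrt_one]
    ring_nf
    nlinarith [Real.sqrt_nonneg π]
  · have hk2 : (2:ℝ) ≤ (k:ℝ) := by exact_mod_cast h2
    set x : ℝ := ((k:ℝ)+1)/2 with hxdef
    have hx : 0 < x := by positivity
    have h1 : (k:ℝ)/2 + 1 = x + 1/2 := by rw [hxdef]; ring
    rw [h1]
    have hA := gamma_half_le x hx
    have hgp := Real.Gamma_pos_of_pos hx
    have h2' : 2 * Real.sqrt x ≤ Real.sqrt k * Real.sqrt π := by
      rw [← Real.sqrt_mul (by positivity) π]
      have : 2 * Real.sqrt x = Real.sqrt (4 * x) := by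
        rw [show (4:ℝ) * x = 2^2 * x by ring, Real.sqrt_mul (by positivity), Real.sqrt_sq (by norm_num)]
      rw [this]
      apply Real.sqrt_le_sqrt
      have hpi : (3:ℝ) ≤ π := by linarith [Real.pi_gt_three]
      have : 4 * x = 2 * (k:ℝ) + 2 := by rw [hxdef]; ring
      nlinarith
    calc 2 * Real.Gamma (x + 1/2) ≤ 2 * (Real.sqrt x * Real.Gamma x) := by linarith
      _ = (2 * Real.sqrt x) * Real.Gamma x := by ring
      _ ≤ (Real.sqrt k * Real.sqrt π) * Real.Gamma x := by
          apply mul_le_mul_of_nonneg_right h2' hgp.le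

-- volume of B := {w | ∑ w j ^2 ≤ 1} in pi space
lemma pi_ball_vol (m : ℕ) :
    (volume : Measure (Fin m → ℝ)) {w : Fin m → ℝ | ∑ j, (w j)^2 ≤ 1}
      = ENNReal.ofReal (Real.sqrt π ^ m / Real.Gamma ((m:ℝ)/2 + 1)) := by
  rcases Nat.eq_zero_or_pos m with hm | hm
  · subst hm
    have : {w : Fin 0 → ℝ | ∑ j, (w j)^2 ≤ 1} = Set.univ := by
      ext w; simp
    rw [this, volume_pi, Measure.pi_univ]
    simp [Real.Gamma_one]
  · have : Nonempty (Fin m) := ⟨⟨0, hm⟩⟩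
    have hmp := EuclideanSpace.volume_preserving_symm_measurableEquiv_toLp (Fin m)
    have hset : (MeasurableEquiv.toLp 2 (Fin m → ℝ)).symm ⁻¹' {w : Fin m → ℝ | ∑ j, (w j)^2 ≤ 1}
        = Metric.closedBall (0 : EuclideanSpace ℝ (Fin m)) 1 := by
      ext z
      simp only [Set.mem_preimage, Set.mem_setOf_eq, Metric.mem_closedBall, dist_zero_right]
      have hz : (MeasurableEquiv.toLp 2 (Fin m → ℝ)).symm z = fun j => z j := rfl
      rw [hz]
      rw [EuclideanSpace.norm_eq]
      constructor
      · intro h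
        calc Real.sqrt (∑ i, ‖z i‖^2) = Real.sqrt (∑ i, (z i)^2) := by simp [sq_abs]
          _ ≤ Real.sqrt 1 := Real.sqrt_le_sqrt h
          _ = 1 := Real.sqrt_one
      · intro h
        have h2 : (∑ i, ‖z i‖^2) ≤ 1 := by
          have := Real.sq_sqrt (by positivity : (0:ℝ) ≤ ∑ i, ‖z i‖^2)
          nlinarith [Real.sqrt_nonneg (∑ i, ‖z i‖^2)]
        calc (∑ j, (z j)^2) = ∑ i, ‖z i‖^2 := by simp [sq_abs]
          _ ≤ 1 := h2
    have hms : MeasurableSet {w : Fin m → ℝ | ∑ j, (w j)^2 ≤ 1} :=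
      measurableSet_le (Finset.measurable_sum _ fun j _ => (measurable_pi_apply j).pow_const 2)
        measurable_const
    rw [← hmp.measure_preimage hms.nullMeasurableSet, hset,
      EuclideanSpace.volume_closedBall]
    simp [Fintype.card_fin]

lemma slab_vol (m : ℕ) (t : ℝ) (ht : 0 < t) (v : EuclideanSpace ℝ (Fin (m+1))) (hv : ‖v‖ = 1) :
    volume {z : EuclideanSpace ℝ (Fin (m+1)) | ‖z‖ < 1 ∧ |(inner ℝ z v : ℝ)| < t}
      ≤ ENNReal.ofReal (t * Real.sqrt (m+1))
        * volume (Metric.ball (0 : EuclideanSpace ℝ (Fin (m+1))) 1) := by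
  classical
  have hcoord : Measurable fun y : EuclideanSpace ℝ (Fin (m+1)) => y 0 :=
    (measurable_pi_apply (0 : Fin (m+1))).comp
      (MeasurableEquiv.toLp 2 (Fin (m+1) → ℝ)).symm.measurable
  set e₀ : EuclideanSpace ℝ (Fin (m+1)) := EuclideanSpace.single (0 : Fin (m+1)) (1:ℝ) with he₀def
  have he₀ : ‖e₀‖ = 1 := by
    rw [he₀def, EuclideanSpace.norm_single]; norm_num
  set O := Submodule.reflection (ℝ ∙ (v - e₀))ᗮ with hOdef
  have hOv : O v = e₀ := Submodule.reflection_sub (by rw [hv, he₀])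
  have hms1 : MeasurableSet {y : EuclideanSpace ℝ (Fin (m+1)) | ‖y‖ < 1 ∧ |y 0| < t} :=
    (measurableSet_lt measurable_norm measurable_const).inter
      (measurableSet_lt hcoord.abs measurable_const)
  have hpre : {z : EuclideanSpace ℝ (Fin (m+1)) | ‖z‖ < 1 ∧ |(inner ℝ z v : ℝ)| < t}
      = O ⁻¹' {y : EuclideanSpace ℝ (Fin (m+1)) | ‖y‖ < 1 ∧ |y 0| < t} := by
    ext z
    simp only [Set.mem_setOf_eq, Set.mem_preimage]
    have h1 : ‖O z‖ = ‖z‖ := O.norm_map z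
    have h2 : (O z) 0 = (inner ℝ z v : ℝ) := by
      have h3 : (inner ℝ (O z) e₀ : ℝ) = (O z) 0 := by
        rw [he₀def, EuclideanSpace.inner_single_right]
        simp
      rw [← h3, ← hOv, LinearIsometryEquiv.inner_map_map]
    rw [h1, h2]
  have hvol1 : volume {z : EuclideanSpace ℝ (Fin (m+1)) | ‖z‖ < 1 ∧ |(inner ℝ z v : ℝ)| < t}
      = volume {y : EuclideanSpace ℝ (Fin (m+1)) | ‖y‖ < 1 ∧ |y 0| < t} := by
    rw [hpre, O.measurePreserving.measure_preimage hms1.nullMeasurableSet]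
  rw [hvol1]
  -- push to pi space
  have hmp := EuclideanSpace.volume_preserving_symm_measurableEquiv_toLp (Fin (m+1))
  set A : Set (Fin (m+1) → ℝ) := {y | |y 0| < t ∧ ∑ j : Fin m, (y j.succ)^2 ≤ 1} with hAdef
  have hmeasf : Measurable fun y : Fin (m+1) → ℝ => ∑ j : Fin m, (y j.succ)^2 :=
    Finset.measurable_sum _ fun j _ => (measurable_pi_apply _).pow_const 2
  have hmsA : MeasurableSet A :=
    (measurableSet_lt (measurable_pi_apply 0).abs measurable_const).inter
      (measurableSet_le hmeasf measurable_const)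
  have hsub : {y : EuclideanSpace ℝ (Fin (m+1)) | ‖y‖ < 1 ∧ |y 0| < t}
      ⊆ (MeasurableEquiv.toLp 2 (Fin (m+1) → ℝ)).symm ⁻¹' A := by
    intro z hz
    obtain ⟨hz1, hz2⟩ := hz
    have hz' : (MeasurableEquiv.toLp 2 (Fin (m+1) → ℝ)).symm z = fun j => z j := rfl
    simp only [Set.mem_preimage, hz', hAdef, Set.mem_setOf_eq]
    refine ⟨hz2, ?_⟩
    have hnorm : ‖z‖ = Real.sqrt (∑ i, (z i)^2) := by
      rw [EuclideanSpace.norm_eq]; simp [sq_abs]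
    have hS : (0:ℝ) ≤ ∑ i, (z i)^2 := by positivity
    have hz1' : Real.sqrt (∑ i, (z i)^2) < 1 := hnorm ▸ hz1
    have hlt : (∑ i, (z i)^2) < 1 := by
      nlinarith [Real.sq_sqrt hS, Real.sqrt_nonneg (∑ i, (z i)^2)]
    have hsplit : (∑ i, (z i)^2) = (z 0)^2 + ∑ j : Fin m, (z j.succ)^2 :=
      Fin.sum_univ_succ _
    nlinarith [sq_nonneg (z 0)]
  have hvol2 : volume {y : EuclideanSpace ℝ (Fin (m+1)) | ‖y‖ < 1 ∧ |y 0| < t}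
      ≤ (volume : Measure (Fin (m+1) → ℝ)) A := by
    rw [← hmp.measure_preimage hmsA.nullMeasurableSet]
    exact measure_mono hsub
  -- compute vol A via piFinSuccAbove
  have hψ := measurePreserving_piFinSuccAbove (fun _ : Fin (m+1) => (volume : Measure ℝ)) 0
  set B : Set (Fin m → ℝ) := {w | ∑ j, (w j)^2 ≤ 1} with hBdef
  have hmsB : MeasurableSet B :=
    measurableSet_le (Finset.measurable_sum _ fun j _ => (measurable_pi_apply j).pow_const 2)
      measurable_const
  have hA2 : A = (MeasurableEquiv.piFinSuccAbove (fun _ => ℝ) 0) ⁻¹' ((Set.Ioo (-t) t) ×ˢ B) := by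
    ext y
    simp only [Set.mem_preimage, MeasurableEquiv.piFinSuccAbove_apply, Set.mem_prod,
      Set.mem_Ioo, hAdef, hBdef, Set.mem_setOf_eq, Fin.succAbove_zero]
    constructor
    · rintro ⟨h1, h2⟩
      exact ⟨abs_lt.mp h1, h2⟩
    · rintro ⟨h1, h2⟩
      exact ⟨abs_lt.mpr h1, h2⟩
  have hvolA : (volume : Measure (Fin (m+1) → ℝ)) A
      = ENNReal.ofReal (2*t) * ENNReal.ofReal (Real.sqrt π ^ m / Real.Gamma ((m:ℝ)/2 + 1)) := by
    rw [hA2, volume_pi, hψ.measure_preimage ((measurableSet_Ioo.prod hmsB).nullMeasurableSet),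
      Measure.prod_prod, Real.volume_Ioo, ← volume_pi, pi_ball_vol m]
    congr 1
    ring
  -- final comparison
  have hG1 : 0 < Real.Gamma ((m:ℝ)/2+1) := Real.Gamma_pos_of_pos (by positivity)
  have hG2 : 0 < Real.Gamma (((m:ℝ)+1)/2+1) := Real.Gamma_pos_of_pos (by positivity)
  have hG := gamma_ineq (m+1) (by omega)
  push_cast at hG
  rw [show ((m:ℝ)+1+1)/2 = (m:ℝ)/2+1 by ring] at hG
  -- hG : 2 * Γ((m+1)/2 + 1) ≤ √(m+1) * √π * Γ(m/2+1)
  refine le_trans (le_trans hvol2 hvolA.le) ?_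
  rw [EuclideanSpace.volume_ball]
  simp only [Fintype.card_fin]
  push_cast
  rw [ENNReal.ofReal_one, one_pow, one_mul,
    ← ENNReal.ofReal_mul (by positivity : (0:ℝ) ≤ 2*t),
    ← ENNReal.ofReal_mul (by positivity : (0:ℝ) ≤ t * Real.sqrt ((m:ℝ)+1))]
  apply ENNReal.ofReal_le_ofReal
  rw [show Real.sqrt π ^ (m+1) = Real.sqrt π ^ m * Real.sqrt π from pow_succ _ _]
  rw [← mul_div_assoc, ← mul_div_assoc, div_le_div_iff₀ hG1 hG2]
  have hP : (0:ℝ) ≤ Real.sqrt π ^ m := by positivity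
  nlinarith [mul_le_mul_of_nonneg_left hG (mul_nonneg ht.le hP), Real.sqrt_nonneg π,
    Real.sqrt_nonneg ((m:ℝ)+1)]

lemma main_band (m : ℕ)
    (μ : Measure (EuclideanSpace ℝ (Fin (m+1)))) [IsProbabilityMeasure μ]
    (hsphere : μ (Metric.sphere (0 : EuclideanSpace ℝ (Fin (m+1))) 1)ᶜ = 0)
    (hrot : ∀ O : EuclideanSpace ℝ (Fin (m+1)) ≃ₗᵢ[ℝ] EuclideanSpace ℝ (Fin (m+1)),
      μ.map O = μ)
    (e : EuclideanSpace ℝ (Fin (m+1))) (he : ‖e‖ = 1) (t : ℝ) (ht : 0 < t) :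
    μ {v | |(inner ℝ v e : ℝ)| < t} ≤ ENNReal.ofReal (t * Real.sqrt (m+1)) := by
  classical
  have hinner : Continuous fun p : EuclideanSpace ℝ (Fin (m+1)) × EuclideanSpace ℝ (Fin (m+1)) =>
      (inner ℝ p.1 p.2 : ℝ) := continuous_inner
  have hS : MeasurableSet {p : EuclideanSpace ℝ (Fin (m+1)) × EuclideanSpace ℝ (Fin (m+1)) |
      |(inner ℝ p.1 p.2 : ℝ)| < t} :=
    measurableSet_lt hinner.abs.measurable measurable_const
  have hBmeas : ∀ w : EuclideanSpace ℝ (Fin (m+1)),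
      MeasurableSet {v : EuclideanSpace ℝ (Fin (m+1)) | |(inner ℝ v w : ℝ)| < t} := fun w =>
    measurableSet_lt ((continuous_id.inner continuous_const).abs).measurable measurable_const
  have hBmeas' : ∀ v : EuclideanSpace ℝ (Fin (m+1)),
      MeasurableSet {w : EuclideanSpace ℝ (Fin (m+1)) | |(inner ℝ v w : ℝ)| < t} := fun v =>
    measurableSet_lt ((continuous_const.inner continuous_id).abs).measurable measurable_const
  -- constancy of the band measure on the sphere
  have band_const : ∀ e' : EuclideanSpace ℝ (Fin (m+1)), ‖e'‖ = 1 →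
      μ {v | |(inner ℝ v e' : ℝ)| < t} = μ {v | |(inner ℝ v e : ℝ)| < t} := by
    intro e' he'
    set O := Submodule.reflection (ℝ ∙ (e - e'))ᗮ with hOdef
    have hOe : O e = e' := Submodule.reflection_sub (he.trans he'.symm)
    have h1 : μ {v | |(inner ℝ v e : ℝ)| < t}
        = μ (O ⁻¹' {v | |(inner ℝ v e : ℝ)| < t}) := by
      conv_lhs => rw [← hrot O]
      rw [Measure.map_apply O.continuous.measurable (hBmeas e)]
    have h2 : O ⁻¹' {v | |(inner ℝ v e : ℝ)| < t} = {v | |(inner ℝ v e' : ℝ)| < t} := by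
      ext v
      simp only [Set.mem_preimage, Set.mem_setOf_eq]
      have h3 : (inner ℝ (O v) e : ℝ) = inner ℝ v e' := by
        have h4 := (LinearIsometryEquiv.inner_map_map O.symm (O v) e).symm
        rw [O.symm_apply_apply] at h4
        have h5 : O.symm e = e' := by
          rw [hOdef, Submodule.reflection_symm]
          exact hOe
        rw [h4, h5]
      rw [h3]
    rw [h1, h2]
  -- the auxiliary concrete measure σ: normalized projection of Lebesgue on the ball
  set n : EuclideanSpace ℝ (Fin (m+1)) → EuclideanSpace ℝ (Fin (m+1)) :=
    fun z => ‖z‖⁻¹ • z with hndef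
  have hn : Measurable n := (measurable_norm.inv).smul measurable_id
  set D : Set (EuclideanSpace ℝ (Fin (m+1))) := Metric.ball 0 1 \ {0} with hDdef
  have hD : MeasurableSet D := measurableSet_ball.diff (measurableSet_singleton 0)
  set V := volume (Metric.ball (0 : EuclideanSpace ℝ (Fin (m+1))) 1) with hVdef
  have hV0 : V ≠ 0 := (Metric.measure_ball_pos volume (0 : EuclideanSpace ℝ (Fin (m+1))) one_pos).ne'
  have hVtop : V ≠ ⊤ := measure_ball_lt_top.ne
  have volD : volume D = V := by
    rw [hDdef, measure_diff_null (measure_singleton 0)]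
  set σ : Measure (EuclideanSpace ℝ (Fin (m+1))) :=
    V⁻¹ • Measure.map n (volume.restrict D) with hσdef
  have hσ_apply : ∀ A : Set (EuclideanSpace ℝ (Fin (m+1))), MeasurableSet A →
      σ A = V⁻¹ * volume (n ⁻¹' A ∩ D) := by
    intro A hA
    rw [hσdef, Measure.smul_apply, Measure.map_apply hn hA, Measure.restrict_apply (hn hA)]
    rfl
  have hσuniv : σ Set.univ = 1 := by
    rw [hσ_apply Set.univ MeasurableSet.univ, Set.preimage_univ, Set.univ_inter, volD]
    exact ENNReal.inv_mul_cancel hV0 hVtop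
  have hσprob : IsProbabilityMeasure σ := ⟨hσuniv⟩
  have hnD_sphere : ∀ z : EuclideanSpace ℝ (Fin (m+1)), z ∈ D →
      n z ∈ Metric.sphere (0 : EuclideanSpace ℝ (Fin (m+1))) 1 := by
    intro z hz
    have hz0 : z ≠ 0 := hz.2
    have hznorm : ‖z‖ ≠ 0 := norm_ne_zero_iff.mpr hz0
    rw [mem_sphere_zero_iff_norm, hndef, norm_smul, norm_inv, norm_norm]
    field_simp
  have hσsphere : σ (Metric.sphere (0 : EuclideanSpace ℝ (Fin (m+1))) 1)ᶜ = 0 := by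
    rw [hσ_apply _ Metric.isClosed_sphere.measurableSet.compl]
    have hempty : n ⁻¹' (Metric.sphere (0 : EuclideanSpace ℝ (Fin (m+1))) 1)ᶜ ∩ D = ∅ := by
      ext z
      simp only [Set.mem_inter_iff, Set.mem_preimage, Set.mem_compl_iff, Set.mem_empty_iff_false,
        iff_false, not_and]
      intro hns hzD
      exact hns (hnD_sphere z hzD)
    rw [hempty, measure_empty, mul_zero]
  have hae_sphere_σ : ∀ᵐ e' ∂σ, e' ∈ Metric.sphere (0 : EuclideanSpace ℝ (Fin (m+1))) 1 := by
    rw [ae_iff]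
    convert hσsphere using 2
    rfl
  have hae_sphere_μ : ∀ᵐ v ∂μ, v ∈ Metric.sphere (0 : EuclideanSpace ℝ (Fin (m+1))) 1 := by
    rw [ae_iff]
    convert hsphere using 2
    rfl
  -- Fubini
  set S : Set (EuclideanSpace ℝ (Fin (m+1)) × EuclideanSpace ℝ (Fin (m+1))) :=
    {p | |(inner ℝ p.1 p.2 : ℝ)| < t} with hSdef
  have hslice1 : ∀ w, ∫⁻ v, S.indicator (fun _ => (1:ENNReal)) (v, w) ∂μ
      = μ {v | |(inner ℝ v w : ℝ)| < t} := by
    intro w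
    have h1 : ∀ v, S.indicator (fun _ => (1:ENNReal)) (v, w)
        = Set.indicator {v | |(inner ℝ v w : ℝ)| < t} (fun _ => (1:ENNReal)) v := by
      intro v
      by_cases h : |(inner ℝ v w : ℝ)| < t
      · rw [Set.indicator_of_mem (by exact h), Set.indicator_of_mem (by exact h)]
      · rw [Set.indicator_of_notMem (by exact h), Set.indicator_of_notMem (by exact h)]
    simp_rw [h1]
    rw [lintegral_indicator (hBmeas w), setLIntegral_one]
  have hslice2 : ∀ v, ∫⁻ w, S.indicator (fun _ => (1:ENNReal)) (v, w) ∂σ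
      = σ {w | |(inner ℝ v w : ℝ)| < t} := by
    intro v
    have h1 : ∀ w, S.indicator (fun _ => (1:ENNReal)) (v, w)
        = Set.indicator {w | |(inner ℝ v w : ℝ)| < t} (fun _ => (1:ENNReal)) w := by
      intro w
      by_cases h : |(inner ℝ v w : ℝ)| < t
      · rw [Set.indicator_of_mem (by exact h), Set.indicator_of_mem (by exact h)]
      · rw [Set.indicator_of_notMem (by exact h), Set.indicator_of_notMem (by exact h)]
    simp_rw [h1]
    rw [lintegral_indicator (hBmeas' v), setLIntegral_one]
  have hswap : ∫⁻ w, (∫⁻ v, S.indicator (fun _ => (1:ENNReal)) (v, w) ∂μ) ∂σ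
      = ∫⁻ v, (∫⁻ w, S.indicator (fun _ => (1:ENNReal)) (v, w) ∂σ) ∂μ := by
    have hmeasS : Measurable (Function.uncurry fun (w v : EuclideanSpace ℝ (Fin (m+1))) =>
        S.indicator (fun _ => (1:ENNReal)) (v, w)) := by
      have : (Function.uncurry fun (w v : EuclideanSpace ℝ (Fin (m+1))) =>
          S.indicator (fun _ => (1:ENNReal)) (v, w))
          = (S.indicator (fun _ => (1:ENNReal))) ∘ Prod.swap := rfl
      rw [this]
      exact ((measurable_const.indicator hS)).comp measurable_swap
    exact lintegral_lintegral_swap hmeasS.aemeasurable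
  -- evaluate the left side
  have hleft : ∫⁻ w, (∫⁻ v, S.indicator (fun _ => (1:ENNReal)) (v, w) ∂μ) ∂σ
      = μ {v | |(inner ℝ v e : ℝ)| < t} := by
    simp_rw [hslice1]
    rw [lintegral_congr_ae (g := fun _ => μ {v | |(inner ℝ v e : ℝ)| < t})]
    · rw [lintegral_const, hσuniv, mul_one]
    · filter_upwards [hae_sphere_σ] with w hw
      exact band_const w (mem_sphere_zero_iff_norm.mp hw)
  -- bound the right side
  have hright : ∫⁻ v, (∫⁻ w, S.indicator (fun _ => (1:ENNReal)) (v, w) ∂σ) ∂μ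
      ≤ ENNReal.ofReal (t * Real.sqrt (m+1)) := by
    have hbound : ∀ᵐ v ∂μ, (∫⁻ w, S.indicator (fun _ => (1:ENNReal)) (v, w) ∂σ)
        ≤ ENNReal.ofReal (t * Real.sqrt (m+1)) := by
      filter_upwards [hae_sphere_μ] with v hv
      rw [hslice2 v]
      have hv1 : ‖v‖ = 1 := mem_sphere_zero_iff_norm.mp hv
      rw [hσ_apply _ (hBmeas' v)]
      have hsub : n ⁻¹' {w | |(inner ℝ v w : ℝ)| < t} ∩ D
          ⊆ {z : EuclideanSpace ℝ (Fin (m+1)) | ‖z‖ < 1 ∧ |(inner ℝ z v : ℝ)| < t} := by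
        rintro z ⟨hz1, hz2⟩
        have hz0 : z ≠ 0 := hz2.2
        have hzb : ‖z‖ < 1 := by
          have := hz2.1
          rwa [Metric.mem_ball, dist_zero_right] at this
        have hznorm : (0:ℝ) < ‖z‖ := norm_pos_iff.mpr hz0
        refine ⟨hzb, ?_⟩
        have hz1' : |(inner ℝ v (n z) : ℝ)| < t := hz1
        have heq : (inner ℝ v (n z) : ℝ) = ‖z‖⁻¹ * inner ℝ v z := by
          rw [hndef, real_inner_smul_right]
        rw [heq, abs_mul, abs_inv, abs_norm] at hz1'
        have h6 : |(inner ℝ v z : ℝ)| < t * ‖z‖ := by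
          calc |(inner ℝ v z:ℝ)| = ‖z‖ * (‖z‖⁻¹ * |(inner ℝ v z:ℝ)|) := by field_simp
            _ < ‖z‖ * t := (mul_lt_mul_iff_right₀ hznorm).mpr hz1'
            _ = t * ‖z‖ := mul_comm _ _
        have h7 : (inner ℝ z v : ℝ) = inner ℝ v z := real_inner_comm _ _
        show |(inner ℝ z v : ℝ)| < t
        rw [h7]
        nlinarith
      have hV' : volume (n ⁻¹' {w | |(inner ℝ v w : ℝ)| < t} ∩ D)
          ≤ ENNReal.ofReal (t * Real.sqrt (m+1)) * V := by
        refine le_trans (measure_mono hsub) ?_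
        exact slab_vol m t ht v hv1
      calc V⁻¹ * volume (n ⁻¹' {w | |(inner ℝ v w : ℝ)| < t} ∩ D)
          ≤ V⁻¹ * (ENNReal.ofReal (t * Real.sqrt (m+1)) * V) := mul_le_mul_right hV' _
        _ = ENNReal.ofReal (t * Real.sqrt (m+1)) * (V⁻¹ * V) := by ring
        _ = ENNReal.ofReal (t * Real.sqrt (m+1)) := by
            rw [ENNReal.inv_mul_cancel hV0 hVtop, mul_one]
    calc ∫⁻ v, (∫⁻ w, S.indicator (fun _ => (1:ENNReal)) (v, w) ∂σ) ∂μ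
        ≤ ∫⁻ _, ENNReal.ofReal (t * Real.sqrt (m+1)) ∂μ := lintegral_mono_ae hbound
      _ = ENNReal.ofReal (t * Real.sqrt (m+1)) := by
          rw [lintegral_const, measure_univ, mul_one]
  rw [← hleft] at *
  rw [hswap]
  exact hright

end Aux

/-- Let the vectors `W (j, i)` for `j : Fin w`, `i : Fin L` be independent random vectors, each
distributed uniformly on the unit sphere `S^{k-1} ⊂ ℝ^k` (i.e. according to the
rotation-invariant probability measure `μ` supported on the sphere). Hash
`x = (x_1, …, x_L) ∈ (ℝ^k)^L` to `g(x) ∈ ℤ^{w·L}` whose `(j, i)`-th coordinate is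
`⌊⟨W (j, i), x_i⟩⌋`. Then for any `c > 2√k` and any fixed `x, y` with `‖x_i − y_i‖₂ > c` for
every `i`, the probability that every coordinate of `g x` differs from the corresponding
coordinate of `g y` by at most `1` is strictly less than `(2√k / c)^(w·L)`. -/
theorem hash_false_positive_prob (k L w : ℕ) (hk : 0 < k) (hL : 0 < L) (hw : 0 < w)
    {Ω : Type*} [MeasureSpace Ω] [IsProbabilityMeasure (ℙ : Measure Ω)]
    (μ : Measure (EuclideanSpace ℝ (Fin k))) [IsProbabilityMeasure μ]
    (hsphere : μ (Metric.sphere (0 : EuclideanSpace ℝ (Fin k)) 1)ᶜ = 0)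
    (hrot : ∀ O : EuclideanSpace ℝ (Fin k) ≃ₗᵢ[ℝ] EuclideanSpace ℝ (Fin k),
      μ.map O = μ)
    (W : Fin w × Fin L → Ω → EuclideanSpace ℝ (Fin k))
    (hWmeas : ∀ p, Measurable (W p))
    (hWdist : ∀ p, Measure.map (W p) ℙ = μ)
    (hWindep : iIndepFun W ℙ)
    (x y : Fin L → EuclideanSpace ℝ (Fin k)) (c : ℝ)
    (hc : 2 * Real.sqrt k < c) (hxy : ∀ i, c < ‖x i - y i‖) :
    ℙ {ω : Ω | ∀ (j : Fin w) (i : Fin L),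
        |⌊(inner ℝ (W (j, i) ω) (x i) : ℝ)⌋ - ⌊(inner ℝ (W (j, i) ω) (y i) : ℝ)⌋| ≤ 1}
      < ENNReal.ofReal ((2 * Real.sqrt k / c) ^ (w * L)) := by
  obtain ⟨m, rfl⟩ : ∃ m, k = m + 1 := ⟨k - 1, by omega⟩
  have hsq : Real.sqrt (↑(m+1)) = Real.sqrt ((m:ℝ)+1) := by push_cast; ring_nf
  have hsqrtpos : 0 < Real.sqrt ((m:ℝ)+1) := Real.sqrt_pos.mpr (by positivity)
  have hcpos : 0 < c := lt_trans (by rw [hsq]; positivity) hc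
  set R : ℝ := 2 * Real.sqrt (↑(m+1)) / c with hRdef
  have hRpos : 0 < R := by rw [hRdef, hsq]; positivity
  -- the per-coordinate bad sets
  set B : Fin L → Set (EuclideanSpace ℝ (Fin (m+1))) :=
    fun i => {v | |⌊(inner ℝ v (x i) : ℝ)⌋ - ⌊(inner ℝ v (y i) : ℝ)⌋| ≤ 1} with hBdef
  have hBms : ∀ i, MeasurableSet (B i) := by
    intro i
    have hf : Measurable fun v : EuclideanSpace ℝ (Fin (m+1)) =>
        |⌊(inner ℝ v (x i) : ℝ)⌋ - ⌊(inner ℝ v (y i) : ℝ)⌋| :=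
      (((continuous_id.inner continuous_const).measurable.floor).sub
        ((continuous_id.inner continuous_const).measurable.floor)).abs
    exact hf measurableSet_Iic
  have hsetr : {ω : Ω | ∀ (j : Fin w) (i : Fin L),
        |⌊(inner ℝ (W (j, i) ω) (x i) : ℝ)⌋ - ⌊(inner ℝ (W (j, i) ω) (y i) : ℝ)⌋| ≤ 1}
      = ⋂ p : Fin w × Fin L, (W p) ⁻¹' (B p.2) := by
    ext ω
    simp only [Set.mem_setOf_eq, Set.mem_iInter, Set.mem_preimage, hBdef, Prod.forall]
  have hindep : ℙ (⋂ p : Fin w × Fin L, (W p) ⁻¹' (B p.2))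
      = ∏ p : Fin w × Fin L, ℙ ((W p) ⁻¹' (B p.2)) :=
    hWindep.meas_iInter (fun p => ⟨B p.2, hBms p.2, rfl⟩)
  -- per-factor bound
  set a : Fin L → ℝ := fun i => 2 / ‖x i - y i‖ * Real.sqrt ((m:ℝ)+1) with hadef
  have hnormpos : ∀ i, (0:ℝ) < ‖x i - y i‖ := fun i => lt_trans hcpos (hxy i)
  have hfactor : ∀ p : Fin w × Fin L, ℙ ((W p) ⁻¹' (B p.2)) ≤ ENNReal.ofReal (a p.2) := by
    intro p
    set i := p.2
    have hPM : ℙ ((W p) ⁻¹' (B i)) = μ (B i) := by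
      rw [← hWdist p, Measure.map_apply (hWmeas p) (hBms i)]
    rw [hPM]
    set u := x i - y i with hudef
    have hu : 0 < ‖u‖ := hnormpos i
    set e : EuclideanSpace ℝ (Fin (m+1)) := ‖u‖⁻¹ • u with hedef
    have he : ‖e‖ = 1 := by
      rw [hedef, norm_smul, norm_inv, norm_norm]
      field_simp
    set tt : ℝ := 2 / ‖u‖ with httdef
    have htt : 0 < tt := by positivity
    have hsub : B i ⊆ {v | |(inner ℝ v e : ℝ)| < tt} := by
      intro v hv
      simp only [hBdef, Set.mem_setOf_eq] at hv
      set A := (inner ℝ v (x i) : ℝ) with hA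
      set Bb := (inner ℝ v (y i) : ℝ) with hBb
      have hinnersub : (inner ℝ v u : ℝ) = A - Bb := by
        rw [hudef, inner_sub_right]
      have habs := abs_le.mp hv
      have hfl1 : ((⌊A⌋ - ⌊Bb⌋ : ℤ) : ℝ) ≤ 1 := by exact_mod_cast habs.2
      have hfl2 : (-1 : ℝ) ≤ ((⌊A⌋ - ⌊Bb⌋ : ℤ) : ℝ) := by exact_mod_cast habs.1
      push_cast at hfl1 hfl2
      have h1 := Int.floor_le A
      have h2 := Int.lt_floor_add_one A
      have h3 := Int.floor_le Bb
      have h4 := Int.lt_floor_add_one Bb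
      have h5 : |(inner ℝ v u : ℝ)| < 2 := by
        rw [hinnersub, abs_lt]
        constructor <;> nlinarith
      show |(inner ℝ v e : ℝ)| < tt
      rw [hedef, real_inner_smul_right, httdef, abs_mul, abs_inv, abs_norm]
      rw [div_eq_inv_mul]
      exact (mul_lt_mul_iff_right₀ (by positivity)).mpr h5
    calc μ (B i) ≤ μ {v | |(inner ℝ v e : ℝ)| < tt} := measure_mono hsub
      _ ≤ ENNReal.ofReal (tt * Real.sqrt ((m:ℝ)+1)) := by
          have := main_band m μ hsphere hrot e he tt htt
          rwa [show ((m:ℝ)+1) = ((m+1 : ℕ) : ℝ) by push_cast; ring] at this ⊢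
      _ = ENNReal.ofReal (a i) := rfl
  -- combine
  have hapos : ∀ i, 0 < a i := fun i => by
    show 0 < 2 / ‖x i - y i‖ * Real.sqrt ((m:ℝ)+1)
    have := hnormpos i
    positivity
  have haR : ∀ i, a i < R := by
    intro i
    have ha' : a i = 2 * Real.sqrt ((m:ℝ)+1) / ‖x i - y i‖ := by
      show 2 / ‖x i - y i‖ * Real.sqrt ((m:ℝ)+1) = _
      ring
    rw [ha', hRdef, hsq]
    exact div_lt_div_of_pos_left (by positivity) hcpos (hxy i)
  have hne : (Finset.univ : Finset (Fin w × Fin L)).Nonempty := by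
    refine ⟨(⟨0, hw⟩, ⟨0, hL⟩), Finset.mem_univ _⟩
  have hprodlt : ∏ p : Fin w × Fin L, a p.2 < R ^ (w * L) := by
    calc ∏ p : Fin w × Fin L, a p.2 < ∏ _p : Fin w × Fin L, R :=
        Finset.prod_lt_prod_of_nonempty (fun p _ => hapos p.2) (fun p _ => haR p.2) hne
      _ = R ^ (w * L) := by
        rw [Finset.prod_const, Finset.card_univ, Fintype.card_prod, Fintype.card_fin,
          Fintype.card_fin]
  calc ℙ {ω : Ω | ∀ (j : Fin w) (i : Fin L),
        |⌊(inner ℝ (W (j, i) ω) (x i) : ℝ)⌋ - ⌊(inner ℝ (W (j, i) ω) (y i) : ℝ)⌋| ≤ 1}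
      = ∏ p : Fin w × Fin L, ℙ ((W p) ⁻¹' (B p.2)) := by rw [hsetr, hindep]
    _ ≤ ∏ p : Fin w × Fin L, ENNReal.ofReal (a p.2) :=
        Finset.prod_le_prod' (fun p _ => hfactor p)
    _ = ENNReal.ofReal (∏ p : Fin w × Fin L, a p.2) := by
        rw [← ENNReal.ofReal_prod_of_nonneg (fun p _ => (hapos p.2).le)]
    _ < ENNReal.ofReal (R ^ (w * L)) := by
        rw [ENNReal.ofReal_lt_ofReal_iff (by positivity)]
        exact hprodlt
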